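/- Define g₀ : ℂ → ℝ by g₀(z) := log max{1,|z|} − (1/2)·log(1+|z|²). Then g₀ is Lipschitz continuous with respect to the normalized chordal metric: there exists C ≥ 0 such that for all z, w ∈ ℂ, |g₀(z) − g₀(w)| ≤ C · [z,w]. -/

import Mathlib

/-- The normalized chordal metric on `ℂ ⊆ ℙ¹(ℂ)`:
`[z,w] = |z−w| / (√(1+|z|²)·√(1+|w|²))`. -/
noncomputable def chordalMetric (z w : ℂ) : ℝ :=
  ‖z - w‖ /
    (Real.sqrt (1 + ‖z‖ ^ 2) * Real.sqrt (1 + ‖w‖ ^ 2))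

private lemma log_sub_le_aux {a b : ℝ} (hb : 1/2 ≤ b) (hba : b ≤ a) :
    Real.log a - Real.log b ≤ 2 * (a - b) := by
  have hb0 : 0 < b := by linarith
  have ha0 : 0 < a := lt_of_lt_of_le hb0 hba
  have h1 : Real.log a - Real.log b = Real.log (a / b) := by
    rw [Real.log_div (ne_of_gt ha0) (ne_of_gt hb0)]
  have h2 : Real.log (a / b) ≤ a / b - 1 :=
    Real.log_le_sub_one_of_pos (by positivity)
  have h3 : a / b ≤ 2 * (a - b) + 1 := by
    rw [div_le_iff₀ hb0]; nlinarith
  linarith [h1 ▸ h2]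

private lemma log_lip {u v : ℝ} (hu : 1/2 ≤ u) (hv : 1/2 ≤ v) :
    |Real.log u - Real.log v| ≤ 2 * |u - v| := by
  rcases le_total v u with h | h
  · rw [abs_of_nonneg (by linarith : (0:ℝ) ≤ u - v),
      abs_of_nonneg (sub_nonneg.2 (Real.log_le_log (by linarith) h))]
    exact log_sub_le_aux hv h
  · rw [abs_of_nonpos (by linarith : u - v ≤ 0),
      abs_of_nonpos (sub_nonpos.2 (Real.log_le_log (by linarith) h))]
    have := log_sub_le_aux hu h
    linarith

private lemma num_bound {r s A B : ℝ} (hr : 0 ≤ r) (hs : 0 ≤ s) (hrs : r ≤ s)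
    (hA2 : A ^ 2 = 1 + r ^ 2) (hB2 : B ^ 2 = 1 + s ^ 2)
    (hA1 : 1 ≤ A) (hB1 : 1 ≤ B)
    (hrA : r ≤ A) (hsB : s ≤ B) (hAB : 1 + r * s ≤ A * B) :
    |max 1 (r ^ 2) * (1 + s ^ 2) - max 1 (s ^ 2) * (1 + r ^ 2)|
      ≤ 2 * (s - r) * (A * B) := by
  have hAB1 : 1 ≤ A * B := one_le_mul_of_one_le_of_one_le hA1 hB1
  rcases le_total (r ^ 2) 1 with h1 | h1 <;> rcases le_total (s ^ 2) 1 with h2 | h2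
  · rw [max_eq_left h1, max_eq_left h2]
    have hsum : s + r ≤ 2 * (A * B) := by nlinarith
    have hkey := mul_le_mul_of_nonneg_left hsum (sub_nonneg.2 hrs)
    rw [abs_le]; constructor <;> nlinarith
  · rw [max_eq_left h1, max_eq_right h2]
    -- N = (1 + s²) - s²(1 + r²) = 1 - r²s²
    have hkey : |1 - r * s| ≤ s - r := by
      have hr1 : r ≤ 1 := by nlinarith
      have hs1 : 1 ≤ s := by nlinarith
      rw [abs_le]; constructor <;> nlinarith
    have hkey2 : (0:ℝ) ≤ 1 + r * s := by positivity
    have : |(1 + s ^ 2) - s ^ 2 * (1 + r ^ 2)| = |1 - r * s| * (1 + r * s) := by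
      rw [← abs_of_nonneg hkey2, ← abs_mul]; ring_nf
    calc |1 * (1 + s ^ 2) - s ^ 2 * (1 + r ^ 2)|
        = |1 - r * s| * (1 + r * s) := by rw [← this]; ring_nf
      _ ≤ (s - r) * (A * B) := by
          apply mul_le_mul hkey hAB hkey2 (by linarith [abs_nonneg (1 - r*s)])
      _ ≤ 2 * (s - r) * (A * B) := by nlinarith [abs_nonneg (1 - r*s)]
  · -- s² ≤ 1 ≤ r², with r ≤ s forces r² ≤ s² ≤ 1 ≤ r²
    rw [max_eq_right h1, max_eq_left h2]
    have : r ^ 2 ≤ s ^ 2 := by nlinarith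
    rw [abs_le]; constructor <;> nlinarith
  · rw [max_eq_right h1, max_eq_right h2]
    have hsum : s + r ≤ 2 * (A * B) := by nlinarith
    have hkey := mul_le_mul_of_nonneg_left hsum (sub_nonneg.2 hrs)
    rw [abs_le]; constructor <;> nlinarith

private lemma ratio_lip (r s : ℝ) (hr : 0 ≤ r) (hs : 0 ≤ s) (hrs : r ≤ s) :
    |max 1 (r ^ 2) / (1 + r ^ 2) - max 1 (s ^ 2) / (1 + s ^ 2)|
      ≤ 2 * (s - r) / (Real.sqrt (1 + r ^ 2) * Real.sqrt (1 + s ^ 2)) := by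
  set A := Real.sqrt (1 + r ^ 2) with hA
  set B := Real.sqrt (1 + s ^ 2) with hB
  have hA2 : A ^ 2 = 1 + r ^ 2 := Real.sq_sqrt (by positivity)
  have hB2 : B ^ 2 = 1 + s ^ 2 := Real.sq_sqrt (by positivity)
  have hA0 : 0 ≤ A := Real.sqrt_nonneg _
  have hB0 : 0 ≤ B := Real.sqrt_nonneg _
  have hA1 : 1 ≤ A := by nlinarith [sq_nonneg r]
  have hB1 : 1 ≤ B := by nlinarith [sq_nonneg s]
  have hrA : r ≤ A := by nlinarith
  have hsB : s ≤ B := by nlinarith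
  have hABsq : (1 + r * s) ^ 2 ≤ (A * B) ^ 2 := by
    rw [mul_pow, hA2, hB2]; nlinarith [sq_nonneg (r - s)]
  have hAB : 1 + r * s ≤ A * B := by
    nlinarith [mul_nonneg hA0 hB0, sq_nonneg (A * B - (1 + r * s))]
  have hN := num_bound hr hs hrs hA2 hB2 hA1 hB1 hrA hsB hAB
  have hden : (1 + r ^ 2) * (1 + s ^ 2) = (A * B) * (A * B) := by
    rw [← hA2, ← hB2]; ring
  have hABpos : 0 < A * B := by positivity
  have hdiff : max 1 (r ^ 2) / (1 + r ^ 2) - max 1 (s ^ 2) / (1 + s ^ 2)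
      = (max 1 (r ^ 2) * (1 + s ^ 2) - max 1 (s ^ 2) * (1 + r ^ 2))
        / ((1 + r ^ 2) * (1 + s ^ 2)) := by
    field_simp
  rw [hdiff, abs_div, abs_of_pos (by positivity : (0:ℝ) < (1 + r ^ 2) * (1 + s ^ 2))]
  rw [hden]
  rw [div_le_div_iff₀ (by positivity) hABpos]
  calc |max 1 (r ^ 2) * (1 + s ^ 2) - max 1 (s ^ 2) * (1 + r ^ 2)| * (A * B)
      ≤ (2 * (s - r) * (A * B)) * (A * B) := by
        apply mul_le_mul_of_nonneg_right hN (le_of_lt hABpos)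
    _ = 2 * (s - r) * (A * B * (A * B)) := by ring

private lemma g0_eq (r : ℝ) (hr : 0 ≤ r) :
    Real.log (max 1 r) - (1 / 2) * Real.log (1 + r ^ 2)
      = (1 / 2) * Real.log (max 1 (r ^ 2) / (1 + r ^ 2)) := by
  have h1 : max 1 (r ^ 2) = (max 1 r) ^ 2 := by
    rcases le_total r 1 with h | h
    · rw [max_eq_left (by nlinarith), max_eq_left h]; norm_num
    · rw [max_eq_right (by nlinarith), max_eq_right h]
  have hm : (0:ℝ) < max 1 r := lt_of_lt_of_le one_pos (le_max_left _ _)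
  rw [Real.log_div (by positivity) (by positivity), h1, Real.log_pow]
  push_cast
  ring

private lemma ratio_half (r : ℝ) : 1 / 2 ≤ max 1 (r ^ 2) / (1 + r ^ 2) := by
  rw [div_le_div_iff₀ (by norm_num) (by positivity)]
  rcases le_total (r ^ 2) 1 with h | h
  · rw [max_eq_left h]; nlinarith
  · rw [max_eq_right h]; nlinarith

theorem g0_lipschitz_chordal :
    ∃ C : ℝ, 0 ≤ C ∧ ∀ z w : ℂ,
      |(Real.log (max 1 (‖z‖)) - (1 / 2) * Real.log (1 + ‖z‖ ^ 2))
        - (Real.log (max 1 (‖w‖)) - (1 / 2) * Real.log (1 + ‖w‖ ^ 2))|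
        ≤ C * chordalMetric z w := by
  -- Key symmetric claim for ordered moduli
  have key : ∀ z w : ℂ, ‖z‖ ≤ ‖w‖ →
      |(Real.log (max 1 (‖z‖)) - (1 / 2) * Real.log (1 + ‖z‖ ^ 2))
        - (Real.log (max 1 (‖w‖)) - (1 / 2) * Real.log (1 + ‖w‖ ^ 2))|
        ≤ 2 * chordalMetric z w := by
    intro z w hzw
    set r := ‖z‖ with hrdef
    set s := ‖w‖ with hsdef
    have hr : 0 ≤ r := norm_nonneg z
    have hs : 0 ≤ s := norm_nonneg w
    rw [g0_eq r hr, g0_eq s hs, ← mul_sub, abs_mul]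
    have h1 : |Real.log (max 1 (r ^ 2) / (1 + r ^ 2)) - Real.log (max 1 (s ^ 2) / (1 + s ^ 2))|
        ≤ 2 * |max 1 (r ^ 2) / (1 + r ^ 2) - max 1 (s ^ 2) / (1 + s ^ 2)| :=
      log_lip (ratio_half r) (ratio_half s)
    have h2 := ratio_lip r s hr hs hzw
    have h3 : s - r ≤ ‖z - w‖ := by
      have := abs_norm_sub_norm_le w z
      rw [abs_le] at this
      have h := this.2
      calc s - r ≤ |s - r| := le_abs_self _
        _ ≤ ‖w - z‖ := by
          rw [abs_le]; exact ⟨by linarith [this.1], this.2⟩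
        _ = ‖z - w‖ := by rw [← norm_neg]; ring_nf
    have hden : 0 < Real.sqrt (1 + r ^ 2) * Real.sqrt (1 + s ^ 2) := by positivity
    have h4 : 2 * (s - r) / (Real.sqrt (1 + r ^ 2) * Real.sqrt (1 + s ^ 2))
        ≤ 2 * chordalMetric z w := by
      unfold chordalMetric
      rw [← hrdef, ← hsdef, mul_div_assoc]
      gcongr
    have h5 : |(1:ℝ)/2| = 1/2 := by norm_num
    rw [h5]
    nlinarith [abs_nonneg (Real.log (max 1 (r ^ 2) / (1 + r ^ 2)) -
      Real.log (max 1 (s ^ 2) / (1 + s ^ 2)))]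
  refine ⟨2, by norm_num, fun z w => ?_⟩
  rcases le_total (‖z‖) (‖w‖) with h | h
  · exact key z w h
  · have := key w z h
    rw [abs_sub_comm] at this
    have hsym : chordalMetric w z = chordalMetric z w := by
      unfold chordalMetric
      rw [← norm_neg (w - z)]
      ring_nf
    rw [hsym] at this
    exact this
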